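/- Let each stream s ∈ S have period p_s = 2^{k_s} with k_s ≤ k*, and for each s create p_S/p_s copies v_s^1,…,v_s^{p_S/p_s} where p_S = 2^{k*}; join v_s^i and v_{s'}^j whenever I_s ∩ I_{s'} ≠ ∅ to form graph G*_S. A proper p_S-coloring C of G*_S is 'good' if C(v_s^i) ∈ [(i−1)p_s + 1, i·p_s] for all s and i. Then G*_S admits a good p_S-coloring if and only if for every ℓ ∈ {1,…,n−1}, Σ_{k=0}^{k*} 2^{k*−k}·|{s ∈ S : p_s = 2^k and ℓ ∈ I_s}| ≤ 2^{k*}. -/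

import Mathlib

/-- A "good" partial coloring for the multiplicity interval graph `G*_S`:
streams `s` have intervals `[a s, b s - 1]` and periods `2 ^ k s`; with hyperperiod `2 ^ K`
each stream has `2 ^ (K - k s)` copies indexed by `i < 2 ^ (K - k s)`.  `Q` restricts to a
subset of the streams.  The coloring must be proper (copies with intersecting intervals get
distinct colors) and each copy `i` must receive a color in the window
`[i * 2 ^ k s + 1, (i + 1) * 2 ^ k s]`. -/
def GoodOn {S : Type} (a b k : S → ℕ) (K : ℕ) (Q : S → Prop) (C : S → ℕ → ℕ) : Prop :=
  (∀ s i s' i', Q s → Q s' → i < 2 ^ (K - k s) → i' < 2 ^ (K - k s') →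
      (s ≠ s' ∨ i ≠ i') →
      (Finset.Icc (a s) (b s - 1) ∩ Finset.Icc (a s') (b s' - 1)).Nonempty →
      C s i ≠ C s' i')
  ∧ ∀ s, Q s → ∀ i, i < 2 ^ (K - k s) →
      i * 2 ^ k s + 1 ≤ C s i ∧ C s i ≤ (i + 1) * 2 ^ k s



namespace Stmt6Aux

def ind (p : ℕ × ℕ) (ℓ : ℕ) : ℕ := if p.1 ≤ ℓ ∧ ℓ < p.2 then 1 else 0

def mcnt (M : Multiset (ℕ × ℕ)) (ℓ : ℕ) : ℕ :=
  (M.filter (fun p => p.1 ≤ ℓ ∧ ℓ < p.2)).card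

lemma mcnt_zero (ℓ : ℕ) : mcnt 0 ℓ = 0 := rfl

lemma mcnt_cons (x : ℕ × ℕ) (M : Multiset (ℕ × ℕ)) (ℓ : ℕ) :
    mcnt (x ::ₘ M) ℓ = ind x ℓ + mcnt M ℓ := by
  unfold mcnt ind
  rw [Multiset.filter_cons]
  split_ifs <;> simp [Nat.add_comm]

lemma mcnt_add (M N : Multiset (ℕ × ℕ)) (ℓ : ℕ) :
    mcnt (M + N) ℓ = mcnt M ℓ + mcnt N ℓ := by
  unfold mcnt
  rw [Multiset.filter_add, Multiset.card_add]

/-- decompose a finitely supported ℕ-valued function into indicator sum of intervals -/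
lemma decomp (N : ℕ) : ∀ (n : ℕ) (g : ℕ → ℕ), (Finset.range N).sum g = n →
    (∀ ℓ, N ≤ ℓ → g ℓ = 0) →
    ∃ D : Multiset (ℕ × ℕ), (∀ p ∈ D, p.1 < p.2) ∧ ∀ ℓ, mcnt D ℓ = g ℓ := by
  intro n
  induction n using Nat.strong_induction_on with
  | _ n IH =>
    intro g hsum hg
    by_cases hz : ∀ ℓ, g ℓ = 0
    · exact ⟨0, by simp, fun ℓ => by rw [mcnt_zero, hz ℓ]⟩
    · push_neg at hz
      have hfind : ∃ ℓ, g ℓ ≠ 0 := hz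
      classical
      set ℓ0 := Nat.find hfind with hℓ0def
      have h0 : g ℓ0 ≠ 0 := Nat.find_spec hfind
      have hℓ0N : ℓ0 < N := by
        by_contra hcon
        exact h0 (hg ℓ0 (Nat.le_of_not_lt hcon))
      have he : ∃ m, ℓ0 < m ∧ g m = 0 := ⟨N, hℓ0N, hg N le_rfl⟩
      set e := Nat.find he with hedef
      obtain ⟨he1, he2⟩ : ℓ0 < e ∧ g e = 0 := Nat.find_spec he
      have heN : e ≤ N := Nat.find_min' he ⟨hℓ0N, hg N le_rfl⟩
      have hrun : ∀ m, ℓ0 ≤ m → m < e → 1 ≤ g m := by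
        intro m h1 h2
        rcases Nat.eq_or_lt_of_le h1 with h | h
        · subst h; omega
        · have := Nat.find_min he h2
          push_neg at this
          have := this h
          omega
      set g' : ℕ → ℕ := fun ℓ => g ℓ - (if ℓ0 ≤ ℓ ∧ ℓ < e then 1 else 0) with hg'def
      have hg'eval : ∀ ℓ, g' ℓ = g ℓ - (if ℓ0 ≤ ℓ ∧ ℓ < e then 1 else 0) := fun ℓ => rfl
      have hg'supp : ∀ ℓ, N ≤ ℓ → g' ℓ = 0 := by
        intro ℓ hℓ; rw [hg'eval, hg ℓ hℓ]; split_ifs <;> rfl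
      have hlt : (Finset.range N).sum g' < n := by
        rw [← hsum]
        apply Finset.sum_lt_sum
        · intro i _; split_ifs <;> omega
        · refine ⟨ℓ0, Finset.mem_range.mpr hℓ0N, ?_⟩
          split_ifs with h <;> omega
      obtain ⟨D', hD'1, hD'2⟩ := IH _ hlt g' rfl hg'supp
      refine ⟨(ℓ0, e) ::ₘ D', ?_, ?_⟩
      · intro p hp
        rcases Multiset.mem_cons.mp hp with h | h
        · subst h; exact he1
        · exact hD'1 p h
      · intro ℓ
        rw [mcnt_cons, hD'2 ℓ]
        have hr := hrun ℓ
        simp only [ind, hg'eval]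
        split_ifs with h
        · have := hr h.1 h.2; omega
        · omega

/-- an even multiset of intervals can be split exactly evenly at every point -/
lemma evensplit : ∀ (n : ℕ) (M : Multiset (ℕ × ℕ)), Multiset.card M = n →
    (∀ p ∈ M, p.1 < p.2) → (∀ ℓ, Even (mcnt M ℓ)) →
    ∃ M1 M2, M = M1 + M2 ∧ ∀ ℓ, mcnt M1 ℓ = mcnt M2 ℓ := by
  intro n
  induction n using Nat.strong_induction_on with
  | _ n IH =>
    intro M hcard hne heven
    classical
    rcases Multiset.empty_or_exists_mem M with hM | ⟨x, hx⟩
    · exact ⟨0, 0, by simp [hM], fun ℓ => rfl⟩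
    have hfind : ∃ v, ∃ p ∈ M, p.1 = v := ⟨x.1, x, hx, rfl⟩
    set A := Nat.find hfind with hAdef
    obtain ⟨p0, hp0M, hp0A0⟩ := Nat.find_spec hfind
    have hp0A : p0.1 = A := by rw [hAdef]; exact hp0A0
    have hmin : ∀ p ∈ M, A ≤ p.1 := by
      intro p hp
      by_contra hcon
      exact Nat.find_min hfind (show p.1 < A by omega) ⟨p, hp, rfl⟩
    set F := M.filter (fun p => p.1 ≤ A ∧ A < p.2) with hFdef
    have hFcard : Multiset.card F = mcnt M A := rfl
    have hp0F : p0 ∈ F := by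
      rw [hFdef, Multiset.mem_filter]
      exact ⟨hp0M, le_of_eq hp0A, by rw [← hp0A]; exact hne p0 hp0M⟩
    have h2 : 2 ≤ Multiset.card F := by
      rcases heven A with ⟨r, hr⟩
      have h1 : 0 < Multiset.card F := Multiset.card_pos_iff_exists_mem.mpr ⟨p0, hp0F⟩
      omega
    have hFne : F ≠ 0 := by
      intro h0; rw [h0] at h2; simp at h2
    obtain ⟨p, hpF⟩ := Multiset.exists_mem_of_ne_zero hFne
    have hqne : F.erase p ≠ 0 := by
      intro h0
      have hce := Multiset.card_erase_of_mem hpF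
      rw [h0] at hce; simp at hce; omega
    obtain ⟨q, hqF'⟩ := Multiset.exists_mem_of_ne_zero hqne
    have hqF : q ∈ F := Multiset.mem_of_mem_erase hqF'
    have hF1 : F = p ::ₘ q ::ₘ ((F.erase p).erase q) := by
      rw [Multiset.cons_erase hqF', Multiset.cons_erase hpF]
    have hFM : F ≤ M := Multiset.filter_le _ M
    obtain ⟨t, ht⟩ := Multiset.le_iff_exists_add.mp hFM
    have hM0 : M = p ::ₘ q ::ₘ (((F.erase p).erase q) + t) := by
      rw [ht, hF1]; simp [Multiset.cons_add]
    -- facts about p and q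
    have hpfacts : p.1 = A ∧ A < p.2 := by
      have := Multiset.mem_filter.mp hpF
      have hm := hmin p this.1
      exact ⟨le_antisymm (this.2.1) hm, this.2.2⟩
    have hqfacts : q.1 = A ∧ A < q.2 := by
      have := Multiset.mem_filter.mp hqF
      have hm := hmin q this.1
      exact ⟨le_antisymm (this.2.1) hm, this.2.2⟩
    clear hp0F hqF' hpF hqF hF1 ht hFM h2 hFcard hp0M hp0A hmin
    -- core argument, stated for a symmetric pair
    have key : ∀ u v : ℕ × ℕ, ∀ M0 : Multiset (ℕ × ℕ), M = u ::ₘ v ::ₘ M0 →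
        u.1 = A → v.1 = A → A < u.2 → A < v.2 → u.2 ≤ v.2 →
        ∃ M1 M2, M = M1 + M2 ∧ ∀ ℓ, mcnt M1 ℓ = mcnt M2 ℓ := by
      intro u v M0 hM0 hu1 hv1 hu2 hv2 hle
      have hne0 : ∀ z ∈ M0, z.1 < z.2 := by
        intro z hz
        exact hne z (by rw [hM0]; exact Multiset.mem_cons_of_mem (Multiset.mem_cons_of_mem hz))
      have hMcnt : ∀ ℓ, mcnt M ℓ = ind u ℓ + ind v ℓ + mcnt M0 ℓ := by
        intro ℓ; rw [hM0, mcnt_cons, mcnt_cons]; omega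
      have hn2 : 2 ≤ n := by
        have : Multiset.card M = Multiset.card M0 + 2 := by rw [hM0]; simp
        omega
      rcases eq_or_lt_of_le hle with heq | hlt
      · -- u.2 = v.2 : colors split directly
        have hinduv : ∀ ℓ, ind u ℓ = ind v ℓ := by
          intro ℓ; simp only [ind]; split_ifs <;> omega
        have hev0 : ∀ ℓ, Even (mcnt M0 ℓ) := by
          intro ℓ
          have h := heven ℓ
          rw [hMcnt ℓ, hinduv ℓ] at h
          rw [Nat.even_iff] at h ⊢; omega
        have hcard0 : Multiset.card M0 = n - 2 := by
          have : Multiset.card M = Multiset.card M0 + 2 := by rw [hM0]; simp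
          omega
        obtain ⟨M1', M2', hsum', hbal'⟩ := IH (n-2) (by omega) M0 hcard0 hne0 hev0
        refine ⟨u ::ₘ M1', v ::ₘ M2', ?_, ?_⟩
        · calc M = u ::ₘ v ::ₘ M0 := hM0
          _ = u ::ₘ v ::ₘ (M1' + M2') := by rw [← hsum']
          _ = u ::ₘ (M1' + (v ::ₘ M2')) := by rw [Multiset.add_cons]
          _ = (u ::ₘ M1') + (v ::ₘ M2') := by rw [Multiset.cons_add]
        · intro ℓ; rw [mcnt_cons, mcnt_cons, hbal' ℓ, hinduv ℓ]
      · -- u.2 < v.2 : replace u, v by the residual interval (u.2, v.2)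
        have hident : ∀ ℓ, ind v ℓ = ind u ℓ + ind (u.2, v.2) ℓ := by
          intro ℓ; simp only [ind]; split_ifs <;> omega
        have hne' : ∀ z ∈ (u.2, v.2) ::ₘ M0, z.1 < z.2 := by
          intro z hz
          rcases Multiset.mem_cons.mp hz with h | h
          · subst h; exact hlt
          · exact hne0 z h
        have hev' : ∀ ℓ, Even (mcnt ((u.2, v.2) ::ₘ M0) ℓ) := by
          intro ℓ
          have h := heven ℓ
          rw [hMcnt ℓ] at h
          rw [mcnt_cons]
          have hi := hident ℓ
          rw [Nat.even_iff] at h ⊢; omega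
        have hcard' : Multiset.card ((u.2, v.2) ::ₘ M0) = n - 1 := by
          have h1 : Multiset.card M = Multiset.card M0 + 2 := by rw [hM0]; simp
          have h2 : Multiset.card ((u.2, v.2) ::ₘ M0) = Multiset.card M0 + 1 := by simp
          omega
        obtain ⟨M1', M2', hsum', hbal'⟩ := IH (n-1) (by omega) _ hcard' hne' hev'
        have hrmem : (u.2, v.2) ∈ M1' + M2' := by
          rw [← hsum']; exact Multiset.mem_cons_self _ _
        rcases Multiset.mem_add.mp hrmem with hr | hr
        · set M1'' := M1'.erase (u.2, v.2) with hM1''def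
          have hM1' : M1' = (u.2, v.2) ::ₘ M1'' := (Multiset.cons_erase hr).symm
          have hM0eq : M1'' + M2' = M0 := by
            have hh : (u.2, v.2) ::ₘ (M1'' + M2') = (u.2, v.2) ::ₘ M0 := by
              rw [← Multiset.cons_add, ← hM1', hsum']
            exact (Multiset.cons_inj_right _).mp hh
          refine ⟨v ::ₘ M1'', u ::ₘ M2', ?_, ?_⟩
          · calc M = u ::ₘ v ::ₘ M0 := hM0
            _ = u ::ₘ v ::ₘ (M1'' + M2') := by rw [hM0eq]
            _ = v ::ₘ u ::ₘ (M1'' + M2') := Multiset.cons_swap u v _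
            _ = v ::ₘ (M1'' + (u ::ₘ M2')) := by rw [Multiset.add_cons]
            _ = (v ::ₘ M1'') + (u ::ₘ M2') := by rw [Multiset.cons_add]
          · intro ℓ
            have hb := hbal' ℓ
            rw [hM1', mcnt_cons] at hb
            rw [mcnt_cons, mcnt_cons]
            have hi := hident ℓ
            omega
        · set M2'' := M2'.erase (u.2, v.2) with hM2''def
          have hM2' : M2' = (u.2, v.2) ::ₘ M2'' := (Multiset.cons_erase hr).symm
          have hM0eq : M1' + M2'' = M0 := by
            have hh : (u.2, v.2) ::ₘ (M1' + M2'') = (u.2, v.2) ::ₘ M0 := by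
              rw [← Multiset.add_cons, ← hM2', hsum']
            exact (Multiset.cons_inj_right _).mp hh
          refine ⟨u ::ₘ M1', v ::ₘ M2'', ?_, ?_⟩
          · calc M = u ::ₘ v ::ₘ M0 := hM0
            _ = u ::ₘ v ::ₘ (M1' + M2'') := by rw [hM0eq]
            _ = u ::ₘ (M1' + (v ::ₘ M2'')) := by rw [Multiset.add_cons]
            _ = (u ::ₘ M1') + (v ::ₘ M2'') := by rw [Multiset.cons_add]
          · intro ℓ
            have hb := hbal' ℓ
            rw [hM2', mcnt_cons] at hb
            rw [mcnt_cons, mcnt_cons]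
            have hi := hident ℓ
            omega
    rcases le_total p.2 q.2 with h | h
    · exact key p q _ hM0 hpfacts.1 hqfacts.1 hpfacts.2 hqfacts.2 h
    · exact key q p _ (hM0.trans (Multiset.cons_swap p q _)) hqfacts.1 hpfacts.1 hqfacts.2 hpfacts.2 h

/-- count of active intervals from an indexed family restricted to a finset -/
def fcnt {ι : Type} (T : Finset ι) (A B : ι → ℕ) (ℓ : ℕ) : ℕ :=
  mcnt (T.val.map (fun i => (A i, B i))) ℓ

lemma unmix {ι : Type} [DecidableEq ι] (f : ι → ℕ × ℕ) :
    ∀ (T : Finset ι) (E M1 M2 : Multiset (ℕ × ℕ)),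
      T.val.map f + E = M1 + M2 →
      ∃ χ : ι → Bool, ∀ ℓ,
        mcnt ((T.filter (fun i => χ i = true)).val.map f) ℓ ≤ mcnt M1 ℓ ∧
        mcnt ((T.filter (fun i => χ i = false)).val.map f) ℓ ≤ mcnt M2 ℓ := by
  intro T
  induction T using Finset.induction_on with
  | empty =>
    intro E M1 M2 h
    exact ⟨fun _ => true, fun ℓ => by simp [mcnt_zero]⟩
  | @insert i T' hi IH =>
    intro E M1 M2 heq
    have hmapins : (insert i T').val.map f = f i ::ₘ T'.val.map f := by
      rw [Finset.insert_val, Multiset.ndinsert_of_notMem hi, Multiset.map_cons]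
    have hmem : f i ∈ M1 + M2 := by
      rw [← heq, hmapins]
      exact Multiset.mem_add.mpr (Or.inl (Multiset.mem_cons_self _ _))
    rcases Multiset.mem_add.mp hmem with h1 | h1
    · have hM1 : M1 = f i ::ₘ M1.erase (f i) := (Multiset.cons_erase h1).symm
      have heq' : T'.val.map f + E = M1.erase (f i) + M2 := by
        have hh : f i ::ₘ (T'.val.map f + E) = f i ::ₘ (M1.erase (f i) + M2) := by
          rw [← Multiset.cons_add, ← hmapins, heq, ← Multiset.cons_add, ← hM1]
        exact (Multiset.cons_inj_right _).mp hh
      obtain ⟨χ', hχ'⟩ := IH E _ M2 heq'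
      refine ⟨fun j => if j = i then true else χ' j, fun ℓ => ?_⟩
      constructor
      · have hfil : (insert i T').filter (fun j => (if j = i then true else χ' j) = true)
            = insert i (T'.filter (fun j => χ' j = true)) := by
          rw [Finset.filter_insert, if_pos (by simp)]
          congr 1
          apply Finset.filter_congr
          intro j hj
          have hji : j ≠ i := fun h => hi (h ▸ hj)
          simp [hji]
        rw [hfil]
        have hnm : i ∉ T'.filter (fun j => χ' j = true) :=
          fun h => hi (Finset.mem_of_mem_filter _ h)
        rw [Finset.insert_val, Multiset.ndinsert_of_notMem hnm, Multiset.map_cons, mcnt_cons,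
          hM1, mcnt_cons]
        exact Nat.add_le_add_left (hχ' ℓ).1 _
      · have hfil : (insert i T').filter (fun j => (if j = i then true else χ' j) = false)
            = T'.filter (fun j => χ' j = false) := by
          rw [Finset.filter_insert, if_neg (by simp)]
          apply Finset.filter_congr
          intro j hj
          have hji : j ≠ i := fun h => hi (h ▸ hj)
          simp [hji]
        rw [hfil]
        exact (hχ' ℓ).2
    · have hM2 : M2 = f i ::ₘ M2.erase (f i) := (Multiset.cons_erase h1).symm
      have heq' : T'.val.map f + E = M1 + M2.erase (f i) := by
        have hh : f i ::ₘ (T'.val.map f + E) = f i ::ₘ (M1 + M2.erase (f i)) := by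
          rw [← Multiset.cons_add, ← hmapins, heq, ← Multiset.add_cons, ← hM2]
        exact (Multiset.cons_inj_right _).mp hh
      obtain ⟨χ', hχ'⟩ := IH E M1 _ heq'
      refine ⟨fun j => if j = i then false else χ' j, fun ℓ => ?_⟩
      constructor
      · have hfil : (insert i T').filter (fun j => (if j = i then false else χ' j) = true)
            = T'.filter (fun j => χ' j = true) := by
          rw [Finset.filter_insert, if_neg (by simp)]
          apply Finset.filter_congr
          intro j hj
          have hji : j ≠ i := fun h => hi (h ▸ hj)
          simp [hji]
        rw [hfil]
        exact (hχ' ℓ).1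
      · have hfil : (insert i T').filter (fun j => (if j = i then false else χ' j) = false)
            = insert i (T'.filter (fun j => χ' j = false)) := by
          rw [Finset.filter_insert, if_pos (by simp)]
          congr 1
          apply Finset.filter_congr
          intro j hj
          have hji : j ≠ i := fun h => hi (h ▸ hj)
          simp [hji]
        rw [hfil]
        have hnm : i ∉ T'.filter (fun j => χ' j = false) :=
          fun h => hi (Finset.mem_of_mem_filter _ h)
        rw [Finset.insert_val, Multiset.ndinsert_of_notMem hnm, Multiset.map_cons, mcnt_cons,
          hM2, mcnt_cons]
        exact Nat.add_le_add_left (hχ' ℓ).2 _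

/-- the key splitting lemma: intervals with pointwise count at most `2c` can be
2-colored with each class pointwise at most `c`. -/
lemma splitU {ι : Type} [DecidableEq ι] (T : Finset ι) (A B : ι → ℕ)
    (hAB : ∀ i ∈ T, A i < B i) (c : ℕ → ℕ) (N : ℕ)
    (hN : ∀ ℓ, N ≤ ℓ → fcnt T A B ℓ = 0)
    (hc : ∀ ℓ, fcnt T A B ℓ ≤ 2 * c ℓ) :
    ∃ χ : ι → Bool, ∀ ℓ,
      fcnt (T.filter (fun i => χ i = true)) A B ℓ ≤ c ℓ ∧
      fcnt (T.filter (fun i => χ i = false)) A B ℓ ≤ c ℓ := by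
  classical
  obtain ⟨D, hD1, hD2⟩ := decomp N _ (fun ℓ => if ℓ < N then 2 * c ℓ - fcnt T A B ℓ else 0)
    rfl (fun ℓ h => by rw [if_neg (by omega)])
  have hMcnt : ∀ ℓ, mcnt (T.val.map (fun i => (A i, B i)) + D) ℓ
      = fcnt T A B ℓ + (if ℓ < N then 2 * c ℓ - fcnt T A B ℓ else 0) := by
    intro ℓ; rw [mcnt_add, hD2]; rfl
  have hMeval : ∀ ℓ, mcnt (T.val.map (fun i => (A i, B i)) + D) ℓ = if ℓ < N then 2 * c ℓ else 0 := by
    intro ℓ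
    rw [hMcnt ℓ]
    have h1 := hc ℓ
    split_ifs with h
    · omega
    · have h2 := hN ℓ (by omega)
      omega
  have hMne : ∀ p ∈ T.val.map (fun i => (A i, B i)) + D, p.1 < p.2 := by
    intro p hp
    rcases Multiset.mem_add.mp hp with h | h
    · obtain ⟨i, hiT, hieq⟩ := Multiset.mem_map.mp h
      rw [← hieq]
      exact hAB i hiT
    · exact hD1 p h
  have hMev : ∀ ℓ, Even (mcnt (T.val.map (fun i => (A i, B i)) + D) ℓ) := by
    intro ℓ
    rw [hMeval ℓ]
    split_ifs
    · exact ⟨c ℓ, two_mul (c ℓ)⟩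
    · exact Even.zero
  obtain ⟨M1, M2, hsum, hbal⟩ := evensplit _ _ rfl hMne hMev
  obtain ⟨χ, hχ⟩ := unmix (fun i => (A i, B i)) T D M1 M2 hsum
  refine ⟨χ, fun ℓ => ?_⟩
  have h1 := (hχ ℓ).1
  have h2 := (hχ ℓ).2
  have hb := hbal ℓ
  have hsc : mcnt M1 ℓ + mcnt M2 ℓ = mcnt (T.val.map (fun i => (A i, B i)) + D) ℓ := by
    rw [hsum, mcnt_add]
  have he := hMeval ℓ
  have hcases : mcnt M1 ℓ ≤ c ℓ ∧ mcnt M2 ℓ ≤ c ℓ := by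
    split_ifs at he <;> omega
  exact ⟨le_trans h1 hcases.1, le_trans h2 hcases.2⟩

lemma mcnt_map {ι : Type} (f : ι → ℕ × ℕ) (s : Multiset ι) (ℓ : ℕ) :
    mcnt (s.map f) ℓ = Multiset.card (s.filter (fun i => (f i).1 ≤ ℓ ∧ ℓ < (f i).2)) := by
  induction s using Multiset.induction_on with
  | empty => rfl
  | cons x s ih =>
    rw [Multiset.map_cons, mcnt_cons, Multiset.filter_cons, Multiset.card_add, ih]
    unfold ind
    split_ifs <;> simp [Nat.add_comm]

lemma fcnt_eq_card {ι : Type} (T : Finset ι) (A B : ι → ℕ) (ℓ : ℕ) :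
    fcnt T A B ℓ = (T.filter (fun i => A i ≤ ℓ ∧ ℓ < B i)).card := by
  unfold fcnt
  rw [mcnt_map]
  rfl

lemma main : ∀ (K : ℕ) (S : Type) (_ : Fintype S) (a b k : S → ℕ) (Q : S → Prop)
    (_ : DecidablePred Q),
    (∀ s, a s < b s) → (∀ s, k s ≤ K) →
    (∀ ℓ : ℕ, (∑ s ∈ Finset.univ.filter fun s => Q s ∧ a s ≤ ℓ ∧ ℓ ≤ b s - 1,
        2 ^ (K - k s)) ≤ 2 ^ K) →
    ∃ C : S → ℕ → ℕ, GoodOn a b k K Q C := by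
  intro K
  induction K with
  | zero =>
    intro S _ a b k Q _ hab hk hcond
    classical
    refine ⟨fun _ _ => 1, ?_, ?_⟩
    · intro s i s' i' hQ hQ' hi hi' hne hint
      exfalso
      have hks : k s = 0 := Nat.le_zero.mp (hk s)
      have hks' : k s' = 0 := Nat.le_zero.mp (hk s')
      rw [hks] at hi; rw [hks'] at hi'
      simp only [Nat.sub_zero, pow_zero, Nat.lt_one_iff] at hi hi'
      have hss : s ≠ s' := by
        rcases hne with h | h
        · exact h
        · omega
      obtain ⟨ℓ, hℓ⟩ := hint
      rw [Finset.mem_inter, Finset.mem_Icc, Finset.mem_Icc] at hℓ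
      have h2 := hcond ℓ
      have hsub : {s, s'} ⊆ Finset.univ.filter (fun t => Q t ∧ a t ≤ ℓ ∧ ℓ ≤ b t - 1) := by
        intro t ht
        rcases Finset.mem_insert.mp ht with h | h
        · subst h; exact Finset.mem_filter.mpr ⟨Finset.mem_univ _, hQ, hℓ.1.1, hℓ.1.2⟩
        · rw [Finset.mem_singleton] at h; subst h
          exact Finset.mem_filter.mpr ⟨Finset.mem_univ _, hQ', hℓ.2.1, hℓ.2.2⟩
      have hge := Finset.sum_le_sum_of_subset hsub (f := fun t => 2 ^ (0 - k t))
      rw [Finset.sum_pair hss] at hge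
      have e1 : (2:ℕ) ^ (0 - k s) = 1 := by simp [hks]
      have e2 : (2:ℕ) ^ (0 - k s') = 1 := by simp [hks']
      have e3 : (2:ℕ) ^ (0:ℕ) = 1 := rfl
      omega
    · intro s hQ i hi
      have hks : k s = 0 := Nat.le_zero.mp (hk s)
      rw [hks] at hi ⊢
      simp only [Nat.sub_zero, pow_zero, Nat.lt_one_iff] at hi
      subst hi
      simp
  | succ K IH =>
    intro S instF a b k Q instQ hab hk hcond
    classical
    have hb1 : ∀ s, 1 ≤ b s := fun s => Nat.lt_of_le_of_lt (Nat.zero_le _) (hab s)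
    have hpowK : (2:ℕ) ^ (K + 1) = 2 ^ K + 2 ^ K := by rw [pow_succ]; ring
    -- the unit streams (k = K+1)
    set T : Finset S := Finset.univ.filter (fun s => Q s ∧ k s = K + 1) with hTdef
    -- load of the big streams
    set bigS : ℕ → ℕ := fun ℓ => ∑ s ∈ Finset.univ,
      (if (Q s ∧ a s ≤ ℓ ∧ ℓ ≤ b s - 1) ∧ k s ≤ K then 2 ^ (K - k s) else 0) with hbigSdef
    have hbigSeval : ∀ ℓ, bigS ℓ = ∑ s ∈ Finset.univ,
        (if (Q s ∧ a s ≤ ℓ ∧ ℓ ≤ b s - 1) ∧ k s ≤ K then 2 ^ (K - k s) else 0) :=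
      fun ℓ => rfl
    -- fcnt of units as an if-sum
    have hfcntT : ∀ ℓ, fcnt T a b ℓ = ∑ s ∈ Finset.univ,
        (if (Q s ∧ a s ≤ ℓ ∧ ℓ ≤ b s - 1) ∧ ¬ k s ≤ K then 1 else 0) := by
      intro ℓ
      rw [fcnt_eq_card, hTdef, Finset.filter_filter, Finset.card_filter]
      apply Finset.sum_congr rfl
      intro s _
      have h1 := hb1 s
      have h2 := hk s
      refine if_congr ?_ rfl rfl
      constructor
      · rintro ⟨⟨hQ, hkk⟩, h3, h4⟩
        exact ⟨⟨hQ, h3, by omega⟩, by omega⟩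
      · rintro ⟨⟨hQ, h3, h4⟩, h5⟩
        exact ⟨⟨hQ, by omega⟩, h3, by omega⟩
    -- split the global condition
    have hsplit : ∀ ℓ, 2 * bigS ℓ + fcnt T a b ℓ ≤ 2 ^ (K + 1) := by
      intro ℓ
      have h0 := hcond ℓ
      rw [Finset.sum_filter] at h0
      have hterm : ∀ s, (if Q s ∧ a s ≤ ℓ ∧ ℓ ≤ b s - 1 then 2 ^ (K + 1 - k s) else 0)
          = 2 * (if (Q s ∧ a s ≤ ℓ ∧ ℓ ≤ b s - 1) ∧ k s ≤ K then 2 ^ (K - k s) else 0)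
          + (if (Q s ∧ a s ≤ ℓ ∧ ℓ ≤ b s - 1) ∧ ¬ k s ≤ K then 1 else 0) := by
        intro s
        have h2 := hk s
        by_cases hQa : Q s ∧ a s ≤ ℓ ∧ ℓ ≤ b s - 1
        · by_cases hkk : k s ≤ K
          · rw [if_pos hQa, if_pos ⟨hQa, hkk⟩, if_neg (by tauto)]
            have : K + 1 - k s = (K - k s) + 1 := by omega
            rw [this, pow_succ]
            ring
          · rw [if_pos hQa, if_neg (by tauto), if_pos ⟨hQa, hkk⟩]
            have : k s = K + 1 := by omega
            rw [this]
            simp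
        · rw [if_neg hQa, if_neg (by tauto), if_neg (by tauto)]
      rw [Finset.sum_congr rfl (fun s _ => hterm s), Finset.sum_add_distrib,
        ← Finset.mul_sum, ← hbigSeval, ← hfcntT] at h0
      exact h0
    have hbig_le : ∀ ℓ, bigS ℓ ≤ 2 ^ K := by
      intro ℓ
      have := hsplit ℓ
      omega
    set c : ℕ → ℕ := fun ℓ => 2 ^ K - bigS ℓ with hcdef
    have hceval : ∀ ℓ, c ℓ = 2 ^ K - bigS ℓ := fun ℓ => rfl
    have hcnt_le : ∀ ℓ, fcnt T a b ℓ ≤ 2 * c ℓ := by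
      intro ℓ
      have h1 := hsplit ℓ
      have h2 := hbig_le ℓ
      have h3 := hceval ℓ
      omega
    have hNbound : ∀ ℓ, (Finset.univ : Finset S).sup b ≤ ℓ → fcnt T a b ℓ = 0 := by
      intro ℓ hℓ
      rw [fcnt_eq_card, Finset.card_eq_zero, Finset.filter_eq_empty_iff]
      rintro s _ ⟨h1, h2⟩
      have := Finset.le_sup (f := b) (Finset.mem_univ s)
      omega
    obtain ⟨χ, hχ⟩ := splitU T a b (fun i _ => hab i) c (Finset.univ.sup b) hNbound hcnt_le
    -- counts of the units on each side, as if-sums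
    have hfcntside : ∀ v : Bool, ∀ ℓ, fcnt (T.filter (fun i => χ i = v)) a b ℓ
        = ∑ s ∈ Finset.univ,
          (if (Q s ∧ a s ≤ ℓ ∧ ℓ ≤ b s - 1) ∧ ¬ k s ≤ K ∧ χ s = v then 1 else 0) := by
      intro v ℓ
      rw [fcnt_eq_card, hTdef, Finset.filter_filter, Finset.filter_filter, Finset.card_filter]
      apply Finset.sum_congr rfl
      intro s _
      have h1 := hb1 s
      have h2 := hk s
      refine if_congr ?_ rfl rfl
      constructor
      · rintro ⟨⟨hQ, hkk⟩, hχs, h3, h4⟩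
        exact ⟨⟨hQ, h3, by omega⟩, by omega, hχs⟩
      · rintro ⟨⟨hQ, h3, h4⟩, h5, hχs⟩
        exact ⟨⟨hQ, by omega⟩, hχs, h3, by omega⟩
    -- conditions for the two sub-instances
    set k' : S → ℕ := fun s => min (k s) K with hk'def
    have hk'eval : ∀ s, k' s = min (k s) K := fun s => rfl
    have hk'le : ∀ s, k' s ≤ K := fun s => min_le_right _ _
    have hcondside : ∀ v : Bool,
        ∀ ℓ : ℕ, (∑ s ∈ Finset.univ.filter
            (fun s => (Q s ∧ (k s ≤ K ∨ χ s = v)) ∧ a s ≤ ℓ ∧ ℓ ≤ b s - 1),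
          2 ^ (K - k' s)) ≤ 2 ^ K := by
      intro v ℓ
      rw [Finset.sum_filter]
      have hterm : ∀ s, (if (Q s ∧ (k s ≤ K ∨ χ s = v)) ∧ a s ≤ ℓ ∧ ℓ ≤ b s - 1
            then 2 ^ (K - k' s) else 0)
          = (if (Q s ∧ a s ≤ ℓ ∧ ℓ ≤ b s - 1) ∧ k s ≤ K then 2 ^ (K - k s) else 0)
          + (if (Q s ∧ a s ≤ ℓ ∧ ℓ ≤ b s - 1) ∧ ¬ k s ≤ K ∧ χ s = v then 1 else 0) := by
        intro s
        have h2 := hk s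
        have h3 := hk'eval s
        by_cases hQs : Q s
        · by_cases hact : a s ≤ ℓ ∧ ℓ ≤ b s - 1
          · by_cases hkk : k s ≤ K
            · rw [if_pos ⟨⟨hQs, Or.inl hkk⟩, hact⟩, if_pos ⟨⟨hQs, hact.1, hact.2⟩, hkk⟩,
                if_neg (by tauto)]
              have : k' s = k s := by omega
              rw [this]
              omega
            · by_cases hχs : χ s = v
              · rw [if_pos ⟨⟨hQs, Or.inr hχs⟩, hact⟩, if_neg (by tauto),
                  if_pos ⟨⟨hQs, hact.1, hact.2⟩, hkk, hχs⟩]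
                have : k' s = K := by omega
                rw [this]
                simp
              · rw [if_neg (by tauto), if_neg (by tauto), if_neg (by tauto)]
          · rw [if_neg (by tauto), if_neg (by tauto), if_neg (by tauto)]
        · rw [if_neg (by tauto), if_neg (by tauto), if_neg (by tauto)]
      rw [Finset.sum_congr rfl (fun s _ => hterm s), Finset.sum_add_distrib,
        ← hbigSeval, ← hfcntside v]
      have h1 : fcnt (T.filter (fun i => χ i = v)) a b ℓ ≤ c ℓ := by
        cases v
        · exact (hχ ℓ).2
        · exact (hχ ℓ).1
      have h2 := hbig_le ℓ
      have h3 := hceval ℓ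
      omega
    obtain ⟨Ct, hCt⟩ := IH S instF a b k' (fun s => Q s ∧ (k s ≤ K ∨ χ s = true))
      inferInstance hab hk'le (hcondside true)
    obtain ⟨Cf, hCf⟩ := IH S instF a b k' (fun s => Q s ∧ (k s ≤ K ∨ χ s = false))
      inferInstance hab hk'le (hcondside false)
    -- upper bounds on the sub-colorings
    have hCtub : ∀ s, (Q s ∧ (k s ≤ K ∨ χ s = true)) → ∀ i, i < 2 ^ (K - k' s) →
        Ct s i ≤ 2 ^ K := by
      intro s hQ i hi
      calc Ct s i ≤ (i + 1) * 2 ^ (k' s) := (hCt.2 s hQ i hi).2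
      _ ≤ 2 ^ (K - k' s) * 2 ^ (k' s) := Nat.mul_le_mul_right _ (by omega)
      _ = 2 ^ K := pow_sub_mul_pow 2 (hk'le s)
    have hCfub : ∀ s, (Q s ∧ (k s ≤ K ∨ χ s = false)) → ∀ i, i < 2 ^ (K - k' s) →
        Cf s i ≤ 2 ^ K := by
      intro s hQ i hi
      calc Cf s i ≤ (i + 1) * 2 ^ (k' s) := (hCf.2 s hQ i hi).2
      _ ≤ 2 ^ (K - k' s) * 2 ^ (k' s) := Nat.mul_le_mul_right _ (by omega)
      _ = 2 ^ K := pow_sub_mul_pow 2 (hk'le s)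
    -- the combined coloring
    set Cdef : S → ℕ → ℕ := fun s i =>
      if k s ≤ K then
        (if i < 2 ^ (K - k s) then Ct s i else 2 ^ K + Cf s (i - 2 ^ (K - k s)))
      else (if χ s then Ct s 0 else 2 ^ K + Cf s 0) with hCdefdef
    have hCeval : ∀ s i, Cdef s i =
        if k s ≤ K then
          (if i < 2 ^ (K - k s) then Ct s i else 2 ^ K + Cf s (i - 2 ^ (K - k s)))
        else (if χ s then Ct s 0 else 2 ^ K + Cf s 0) := fun s i => rfl
    have hpow2 : ∀ s, k s ≤ K → (2:ℕ) ^ (K + 1 - k s) = 2 * 2 ^ (K - k s) := by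
      intro s h
      rw [show K + 1 - k s = (K - k s) + 1 by omega, pow_succ]
      ring
    have hdich : ∀ s i, Q s → i < 2 ^ (K + 1 - k s) →
        (∃ j, Cdef s i = Ct s j ∧ (Q s ∧ (k s ≤ K ∨ χ s = true)) ∧ j < 2 ^ (K - k' s) ∧
          ((k s ≤ K ∧ j = i) ∨ (k s = K + 1 ∧ i = 0 ∧ j = 0))) ∨
        (∃ j, Cdef s i = 2 ^ K + Cf s j ∧ (Q s ∧ (k s ≤ K ∨ χ s = false)) ∧
          j < 2 ^ (K - k' s) ∧
          ((k s ≤ K ∧ 2 ^ (K - k s) ≤ i ∧ j = i - 2 ^ (K - k s)) ∨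
            (k s = K + 1 ∧ i = 0 ∧ j = 0))) := by
      intro s i hQ hi
      rw [hCeval]
      have hmin := hk'eval s
      by_cases h1 : k s ≤ K
      · rw [if_pos h1]
        have hk's : k' s = k s := by omega
        by_cases h2 : i < 2 ^ (K - k s)
        · rw [if_pos h2]
          exact Or.inl ⟨i, rfl, ⟨hQ, Or.inl h1⟩, by rw [hk's]; exact h2, Or.inl ⟨h1, rfl⟩⟩
        · rw [if_neg h2]
          refine Or.inr ⟨i - 2 ^ (K - k s), rfl, ⟨hQ, Or.inl h1⟩, ?_, Or.inl ⟨h1, by omega, rfl⟩⟩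
          rw [hk's]
          have := hpow2 s h1
          omega
      · have hks : k s = K + 1 := by have := hk s; omega
        have hi0 : i = 0 := by
          rw [hks] at hi
          simp only [Nat.sub_self, pow_zero, Nat.lt_one_iff] at hi
          exact hi
        have hk's : k' s = K := by omega
        rw [if_neg h1]
        cases hχs : χ s with
        | false =>
          rw [if_neg (by simp)]
          exact Or.inr ⟨0, rfl, ⟨hQ, Or.inr rfl⟩, by rw [hk's]; simp, Or.inr ⟨hks, hi0, rfl⟩⟩
        | true =>
          rw [if_pos (by simp)]
          exact Or.inl ⟨0, rfl, ⟨hQ, Or.inr rfl⟩, by rw [hk's]; simp, Or.inr ⟨hks, hi0, rfl⟩⟩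
    refine ⟨Cdef, ?_, ?_⟩
    · -- properness
      intro s i s' i' hQ hQ' hi hi' hne hint
      rcases hdich s i hQ hi with ⟨j, he, hQt, hj, hcase⟩ | ⟨j, he, hQf, hj, hcase⟩ <;>
        rcases hdich s' i' hQ' hi' with ⟨j', he', hQt', hj', hcase'⟩ | ⟨j', he', hQf', hj', hcase'⟩
      · rw [he, he']
        apply hCt.1 s j s' j' hQt hQt' hj hj' ?_ hint
        by_cases hss : s = s'
        · subst hss
          rcases hne with h | h
          · exact absurd rfl h
          · right
            rcases hcase with ⟨hA, hB⟩ | ⟨hA, hB, hC⟩ <;>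
              rcases hcase' with ⟨hA', hB'⟩ | ⟨hA', hB', hC'⟩ <;> omega
        · exact Or.inl hss
      · rw [he, he']
        have hub := hCtub s hQt j hj
        have hlb := (hCf.2 s' hQf' j' hj').1
        omega
      · rw [he, he']
        have hub := hCtub s' hQt' j' hj'
        have hlb := (hCf.2 s hQf j hj).1
        omega
      · rw [he, he']
        have hne2 : Cf s j ≠ Cf s' j' := by
          apply hCf.1 s j s' j' hQf hQf' hj hj' ?_ hint
          by_cases hss : s = s'
          · subst hss
            rcases hne with h | h
            · exact absurd rfl h
            · right
              rcases hcase with ⟨hA, hB, hC⟩ | ⟨hA, hB, hC⟩ <;>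
                rcases hcase' with ⟨hA', hB', hC'⟩ | ⟨hA', hB', hC'⟩ <;> omega
          · exact Or.inl hss
        omega
    · -- windows
      intro s hQ i hi
      rw [hCeval]
      have hmin := hk'eval s
      by_cases h1 : k s ≤ K
      · have hk's : k' s = k s := by omega
        rw [if_pos h1]
        by_cases h2 : i < 2 ^ (K - k s)
        · rw [if_pos h2]
          have hw := hCt.2 s ⟨hQ, Or.inl h1⟩ i (by rw [hk's]; exact h2)
          rw [hk's] at hw
          exact hw
        · rw [if_neg h2]
          push_neg at h2
          obtain ⟨u, hu⟩ : ∃ u, i = 2 ^ (K - k s) + u := ⟨i - 2 ^ (K - k s), by omega⟩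
          have hiu : i - 2 ^ (K - k s) = u := by omega
          have hub : u < 2 ^ (K - k s) := by
            have := hpow2 s h1
            omega
          have hw := hCf.2 s ⟨hQ, Or.inl h1⟩ u (by rw [hk's]; exact hub)
          rw [hk's] at hw
          rw [hiu, hu]
          have hHx : 2 ^ (K - k s) * 2 ^ (k s) = 2 ^ K := pow_sub_mul_pow 2 h1
          constructor
          · calc (2 ^ (K - k s) + u) * 2 ^ (k s) + 1
                = 2 ^ K + (u * 2 ^ (k s) + 1) := by rw [add_mul, hHx]; ring
            _ ≤ 2 ^ K + Cf s u := by have := hw.1; omega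
          · calc 2 ^ K + Cf s u ≤ 2 ^ K + (u + 1) * 2 ^ (k s) := by have := hw.2; omega
            _ = (2 ^ (K - k s) + u + 1) * 2 ^ (k s) := by
                rw [add_mul, add_mul, add_mul, hHx]; ring
      · have hks : k s = K + 1 := by have := hk s; omega
        have hk's : k' s = K := by omega
        have hi0 : i = 0 := by
          rw [hks] at hi
          simp only [Nat.sub_self, pow_zero, Nat.lt_one_iff] at hi
          exact hi
        rw [if_neg h1]
        subst hi0
        rw [hks]
        have h01 : (0:ℕ) < 2 ^ (K - k' s) := by positivity
        cases hχs : χ s with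
        | false =>
          rw [if_neg (by simp [hχs])]
          have hw := (hCf.2 s ⟨hQ, Or.inr hχs⟩ 0 h01).1
          have hub := hCfub s ⟨hQ, Or.inr hχs⟩ 0 h01
          constructor
          · omega
          · have : (0 + 1) * 2 ^ (K + 1) = 2 ^ K + 2 ^ K := by rw [hpowK]; ring
            omega
        | true =>
          rw [if_pos (by simp [hχs])]
          have hw := (hCt.2 s ⟨hQ, Or.inr hχs⟩ 0 h01).1
          have hub := hCtub s ⟨hQ, Or.inr hχs⟩ 0 h01
          constructor
          · omega
          · have : (0 + 1) * 2 ^ (K + 1) = 2 ^ K + 2 ^ K := by rw [hpowK]; ring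
            omega

lemma forward (S : Type) [Fintype S] (kstar : ℕ) (a b k : S → ℕ)
    (hk : ∀ s, k s ≤ kstar) (C : S → ℕ → ℕ)
    (hC : GoodOn a b k kstar (fun _ => True) C) (ℓ : ℕ) :
    (∑ s ∈ Finset.univ.filter fun s => a s ≤ ℓ ∧ ℓ ≤ b s - 1, 2 ^ (kstar - k s))
      ≤ 2 ^ kstar := by
  classical
  set F := Finset.univ.filter (fun s : S => a s ≤ ℓ ∧ ℓ ≤ b s - 1) with hF
  have hcardsig : ∑ s ∈ F, 2 ^ (kstar - k s)
      = (F.sigma (fun s => Finset.range (2 ^ (kstar - k s)))).card := by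
    rw [Finset.card_sigma]
    exact (Finset.sum_congr rfl (fun s _ => (Finset.card_range _).symm))
  rw [hcardsig]
  have hsub : ∀ p ∈ F.sigma (fun s => Finset.range (2 ^ (kstar - k s))),
      C p.1 p.2 ∈ Finset.Icc 1 (2 ^ kstar) := by
    intro p hp
    rw [Finset.mem_sigma] at hp
    have hi := Finset.mem_range.mp hp.2
    have hw := hC.2 p.1 trivial p.2 hi
    rw [Finset.mem_Icc]
    constructor
    · omega
    · calc C p.1 p.2 ≤ (p.2 + 1) * 2 ^ (k p.1) := hw.2
      _ ≤ 2 ^ (kstar - k p.1) * 2 ^ (k p.1) := Nat.mul_le_mul_right _ (by omega)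
      _ = 2 ^ kstar := pow_sub_mul_pow 2 (hk p.1)
  have hinj : Set.InjOn (fun p : (_ : S) × ℕ => C p.1 p.2)
      (F.sigma (fun s => Finset.range (2 ^ (kstar - k s)))) := by
    rintro ⟨p1, p2⟩ hp ⟨q1, q2⟩ hq hpq
    by_contra hne
    rw [Finset.mem_coe, Finset.mem_sigma] at hp hq
    have hip := Finset.mem_range.mp hp.2
    have hiq := Finset.mem_range.mp hq.2
    have hmemp := Finset.mem_filter.mp hp.1
    have hmemq := Finset.mem_filter.mp hq.1
    have hne2 : p1 ≠ q1 ∨ p2 ≠ q2 := by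
      by_cases h : p1 = q1
      · refine Or.inr (fun h2 => hne ?_)
        subst h; subst h2; rfl
      · exact Or.inl h
    exact hC.1 p1 p2 q1 q2 trivial trivial hip hiq hne2
      ⟨ℓ, Finset.mem_inter.mpr ⟨Finset.mem_Icc.mpr ⟨hmemp.2.1, hmemp.2.2⟩,
        Finset.mem_Icc.mpr ⟨hmemq.2.1, hmemq.2.2⟩⟩⟩ hpq
  have hcard := Finset.card_le_card_of_injOn _ hsub hinj
  rw [Nat.card_Icc] at hcard
  simpa using hcard

end Stmt6Aux


theorem stmt6 (S : Type) [Fintype S] (n kstar : ℕ) (a b k : S → ℕ)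
    (hab : ∀ s, 1 ≤ a s ∧ a s < b s ∧ b s ≤ n) (hk : ∀ s, k s ≤ kstar) :
    (∃ C : S → ℕ → ℕ, GoodOn a b k kstar (fun _ => True) C) ↔
      ∀ ℓ : ℕ,
        (∑ s ∈ Finset.univ.filter fun s => a s ≤ ℓ ∧ ℓ ≤ b s - 1, 2 ^ (kstar - k s))
          ≤ 2 ^ kstar := by
  classical
  constructor
  · rintro ⟨C, hC⟩ ℓ
    exact Stmt6Aux.forward S kstar a b k hk C hC ℓ
  · intro hcond
    refine Stmt6Aux.main kstar S inferInstance a b k (fun _ => True)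
      (fun _ => Decidable.isTrue trivial) (fun s => (hab s).2.1) hk ?_
    intro ℓ
    refine le_trans (le_of_eq ?_) (hcond ℓ)
    refine Finset.sum_congr ?_ (fun _ _ => rfl)
    apply Finset.filter_congr
    intro s _
    simp
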